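/- Let E be an exterior algebra over a field and G a graph with vertices v_1,...,v_n. If v_i and v_j are vertices with N[v_i] ∩ N[v_j] = ∅ and every neighbor of v_i is adjacent to every neighbor of v_j, then the linear form e_i − e_j is regular on E/I_E(G); i.e., (I_E(G) : e_i − e_j) = I_E(G) + (e_i − e_j). -/

import Mathlib

namespace DIRaux
open ExteriorAlgebra

noncomputable instance {k : Type*} [Field k] {n : ℕ} :
    Module (ExteriorAlgebra k (Fin n → k)) (ExteriorAlgebra k (Fin n → k)) :=
  Semiring.toModule

variable {k : Type*} [Field k] {n : ℕ}

/-- the generators -/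
noncomputable def gen (l : Fin n) : ExteriorAlgebra k (Fin n → k) := ι k (Pi.single l 1)

/-- monomials indexed by lists -/
noncomputable def mon (L : List (Fin n)) : ExteriorAlgebra k (Fin n → k) := (L.map gen).prod

/-- monomials indexed by finsets -/
noncomputable def MON (S : Finset (Fin n)) : ExteriorAlgebra k (Fin n → k) :=
  mon (S.sort (·≤·))

def IsSign (ε : k) : Prop := ε = 1 ∨ ε = -1

lemma IsSign.one : IsSign (1 : k) := Or.inl rfl
lemma IsSign.neg {ε : k} (h : IsSign ε) : IsSign (-ε) := by
  rcases h with h | h <;> simp [IsSign, h]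
lemma IsSign.mul {ε δ : k} (h : IsSign ε) (h' : IsSign δ) : IsSign (ε * δ) := by
  rcases h with h | h <;> rcases h' with h' | h' <;> simp [IsSign, h, h']
lemma IsSign.mul_self {ε : k} (h : IsSign ε) : ε * ε = 1 := by
  rcases h with h | h <;> simp [h]
lemma IsSign.ne_zero {ε : k} (h : IsSign ε) : ε ≠ 0 := by
  rcases h with h | h <;> simp [h]

lemma ι_anticomm (u v : Fin n → k) : ι k u * ι k v = -(ι k v * ι k u) :=
  eq_neg_of_add_eq_zero_left (ι_add_mul_swap u v)

@[simp] lemma mon_nil : mon ([] : List (Fin n)) = (1 : ExteriorAlgebra k (Fin n → k)) := rfl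

lemma mon_cons (l : Fin n) (L : List (Fin n)) :
    mon (l :: L) = (gen l : ExteriorAlgebra k (Fin n → k)) * mon L := by
  simp [mon]

lemma mon_append (L L' : List (Fin n)) :
    mon (L ++ L') = (mon L : ExteriorAlgebra k (Fin n → k)) * mon L' := by
  simp [mon]

/-- sign change under permutation -/
lemma mon_perm {L L' : List (Fin n)} (h : L.Perm L') :
    ∃ ε : k, IsSign ε ∧ (mon L : ExteriorAlgebra k (Fin n → k)) = ε • mon L' := by
  induction h with
  | nil => exact ⟨1, IsSign.one, by simp⟩
  | cons x _ ih =>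
      obtain ⟨ε, hε, h⟩ := ih
      exact ⟨ε, hε, by rw [mon_cons, mon_cons, h, mul_smul_comm]⟩
  | swap x y L =>
      refine ⟨-1, IsSign.one.neg, ?_⟩
      rw [mon_cons, mon_cons, mon_cons, mon_cons, ← mul_assoc, ← mul_assoc,
        gen, gen, ι_anticomm]
      simp
  | trans _ _ ih1 ih2 =>
      obtain ⟨ε, hε, h⟩ := ih1
      obtain ⟨δ, hδ, h'⟩ := ih2
      exact ⟨ε * δ, hε.mul hδ, by rw [h, h', smul_smul]⟩

lemma gen_mul_mon_of_mem {l : Fin n} {L : List (Fin n)} (h : l ∈ L) :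
    (gen l : ExteriorAlgebra k (Fin n → k)) * mon L = 0 := by
  induction L with
  | nil => simp at h
  | cons a L ih =>
      rw [mon_cons, ← mul_assoc]
      rcases eq_or_ne l a with rfl | hla
      · rw [gen, ι_sq_zero, zero_mul]
      · have hl : l ∈ L := by simpa [hla] using h
        rw [gen, gen, ι_anticomm, ← gen, ← gen, neg_mul, mul_assoc, ih hl, mul_zero, neg_zero]

lemma mon_eq_zero_of_not_nodup {L : List (Fin n)} (h : ¬ L.Nodup) :
    (mon L : ExteriorAlgebra k (Fin n → k)) = 0 := by
  induction L with
  | nil => simp at h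
  | cons a L ih =>
      rw [mon_cons]
      by_cases ha : a ∈ L
      · rw [gen_mul_mon_of_mem ha]
      · have : ¬ L.Nodup := by simpa [List.nodup_cons, ha] using h
        rw [ih this, mul_zero]

/-- spanning of the exterior algebra by monomials -/
lemma span_mon_eq_top :
    Submodule.span k (Set.range (mon : List (Fin n) → ExteriorAlgebra k (Fin n → k))) = ⊤ := by
  set S := Submodule.span k (Set.range (mon : List (Fin n) → ExteriorAlgebra k (Fin n → k)))
  rw [eq_top_iff]
  intro x hx; clear hx
  have hmul : ∀ y ∈ S, ∀ z ∈ S, y * z ∈ S := by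
    intro y hy
    induction hy using Submodule.span_induction with
    | mem y hy =>
        obtain ⟨L, rfl⟩ := hy
        intro z hz
        induction hz using Submodule.span_induction with
        | mem z hz =>
            obtain ⟨L', rfl⟩ := hz
            exact Submodule.subset_span ⟨L ++ L', mon_append L L'⟩
        | zero => simpa using Submodule.zero_mem S
        | add a b _ _ ha hb => rw [mul_add]; exact Submodule.add_mem S ha hb
        | smul c a _ ha => rw [mul_smul_comm]; exact Submodule.smul_mem S c ha
    | zero => intro z hz; simpa using Submodule.zero_mem S
    | add a b _ _ ha hb => intro z hz; rw [add_mul]; exact Submodule.add_mem S (ha z hz) (hb z hz)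
    | smul c a _ ha => intro z hz; rw [smul_mul_assoc]; exact Submodule.smul_mem S c (ha z hz)
  induction x using CliffordAlgebra.induction with
  | algebraMap r =>
      have : (algebraMap k (ExteriorAlgebra k (Fin n → k))) r = r • mon [] := by
        simp [Algebra.algebraMap_eq_smul_one]
      rw [this]
      exact Submodule.smul_mem S r (Submodule.subset_span ⟨[], rfl⟩)
  | ι v =>
      have hv : (v : Fin n → k) = ∑ l, v l • (Pi.single l 1 : Fin n → k) := by
        ext m; simp [Pi.single_apply]
      have : ι k v = ∑ l, v l • (mon [l] : ExteriorAlgebra k (Fin n → k)) := by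
        conv_lhs => rw [hv]
        rw [map_sum]
        refine Finset.sum_congr rfl fun l _ => ?_
        rw [map_smul]
        congr 1
        simp [mon, gen]
      rw [this]
      exact Submodule.sum_mem _ fun l _ =>
        Submodule.smul_mem S _ (Submodule.subset_span ⟨[l], rfl⟩)
  | mul a b ha hb => exact hmul a ha b hb
  | add a b ha hb => exact Submodule.add_mem S ha hb

end DIRaux

namespace DIRaux
open ExteriorAlgebra
variable {k : Type*} [Field k] {n : ℕ}

/-- contraction along the `l`-th coordinate -/
noncomputable def D (l : Fin n) :
    ExteriorAlgebra k (Fin n → k) →ₗ[k] ExteriorAlgebra k (Fin n → k) :=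
  CliffordAlgebra.contractLeft (LinearMap.proj l : Module.Dual k (Fin n → k))

lemma D_one (l : Fin n) : D l (1 : ExteriorAlgebra k (Fin n → k)) = 0 := by
  simp [D]

lemma D_iota_mul (l : Fin n) (v : Fin n → k) (x : ExteriorAlgebra k (Fin n → k)) :
    D l (ι k v * x) = v l • x - ι k v * D l x := by
  rw [D, CliffordAlgebra.contractLeft_ι_mul]; rfl

lemma D_gen_mul (l m : Fin n) (x : ExteriorAlgebra k (Fin n → k)) :
    D l (gen m * x) = (if l = m then (1:k) else 0) • x - gen m * D l x := by
  rw [gen, D_iota_mul]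
  congr 2
  simp [Pi.single_apply]

lemma D_mon_of_not_mem {l : Fin n} {L : List (Fin n)} (h : l ∉ L) :
    D l (mon L : ExteriorAlgebra k (Fin n → k)) = 0 := by
  induction L with
  | nil => rw [mon_nil]; exact D_one l
  | cons a L ih =>
      have hla : l ≠ a := fun hh => h (hh ▸ List.mem_cons_self (a := a) (l := L))
      have hl : l ∉ L := fun hh => h (List.mem_cons_of_mem _ hh)
      rw [mon_cons, D_gen_mul, if_neg hla, ih hl, zero_smul, mul_zero, sub_zero]

/-- iterated contraction -/
noncomputable def phiL : List (Fin n) → (ExteriorAlgebra k (Fin n → k) →ₗ[k] k)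
  | [] => (algebraMapInv : ExteriorAlgebra k (Fin n → k) →ₐ[k] k).toLinearMap
  | l :: L => (phiL L) ∘ₗ D l

noncomputable def phiF (S : Finset (Fin n)) : ExteriorAlgebra k (Fin n → k) →ₗ[k] k :=
  phiL (S.sort (·≤·))

lemma phiL_mon_self {L : List (Fin n)} (h : L.Nodup) :
    phiL L (mon L : ExteriorAlgebra k (Fin n → k)) = 1 := by
  induction L with
  | nil => simp [phiL, mon, algebraMapInv]
  | cons a L ih =>
      have ha : a ∉ L := (List.nodup_cons.mp h).1
      rw [phiL, mon_cons, LinearMap.comp_apply, D_gen_mul, if_pos rfl, one_smul,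
        D_mon_of_not_mem ha, mul_zero, sub_zero, ih (List.nodup_cons.mp h).2]

lemma phiL_mon_zero {T L : List (Fin n)} (hT : T.Nodup) (hL : L.Nodup)
    (h : ¬ L.Perm T) : phiL T (mon L : ExteriorAlgebra k (Fin n → k)) = 0 := by
  induction T generalizing L with
  | nil =>
      cases L with
      | nil => exact absurd (List.Perm.refl []) h
      | cons a L =>
          rw [phiL, mon_cons, AlgHom.toLinearMap_apply, map_mul]
          have : algebraMapInv (gen a : ExteriorAlgebra k (Fin n → k)) = 0 := by
            simp [gen, algebraMapInv]
          rw [this, zero_mul]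
  | cons t T ih =>
      rw [phiL, LinearMap.comp_apply]
      by_cases htL : t ∈ L
      · obtain ⟨ε, hε, hmon⟩ := mon_perm (k := k) (List.perm_cons_erase htL)
        have htE : t ∉ L.erase t := fun hh => ((List.Nodup.mem_erase_iff hL).mp hh).1 rfl
        rw [hmon, map_smul, mon_cons, D_gen_mul, if_pos rfl, one_smul,
          D_mon_of_not_mem htE, mul_zero, sub_zero, map_smul]
        have hperm : ¬ (L.erase t).Perm T := by
          intro hp
          exact h (((List.perm_cons_erase htL).trans (hp.cons t)))
        rw [ih (List.nodup_cons.mp hT).2 (hL.erase t) hperm]; simp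
      · rw [D_mon_of_not_mem htL, map_zero]

lemma sort_perm_of_nodup {L : List (Fin n)} (h : L.Nodup) :
    L.Perm (L.toFinset.sort (·≤·)) :=
  List.perm_of_nodup_nodup_toFinset_eq h (Finset.sort_nodup _ _) (by simp)

lemma phiF_MON (T S : Finset (Fin n)) :
    phiF T (MON S : ExteriorAlgebra k (Fin n → k)) = if S = T then 1 else 0 := by
  rcases eq_or_ne S T with rfl | hST
  · rw [if_pos rfl]; exact phiL_mon_self (Finset.sort_nodup _ _)
  · rw [if_neg hST]
    refine phiL_mon_zero (Finset.sort_nodup _ _) (Finset.sort_nodup _ _) ?_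
    intro hperm
    exact hST (by
      have := List.toFinset_eq_of_perm _ _ hperm
      simpa [Finset.sort_toFinset] using this)

lemma MON_ne_zero (S : Finset (Fin n)) : (MON S : ExteriorAlgebra k (Fin n → k)) ≠ 0 := by
  intro h
  have := phiF_MON (k := k) S S
  rw [h, map_zero, if_pos rfl] at this
  exact one_ne_zero this.symm

/-- inserting a generator into a finset monomial -/
lemma gen_mul_MON {l : Fin n} {S : Finset (Fin n)} (h : l ∉ S) :
    ∃ ε : k, IsSign ε ∧
      (gen l : ExteriorAlgebra k (Fin n → k)) * MON S = ε • MON (insert l S) := by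
  have hnd : (l :: S.sort (·≤·)).Nodup := by
    rw [List.nodup_cons]
    exact ⟨fun hh => h ((Finset.mem_sort _).mp hh), Finset.sort_nodup _ _⟩
  have hperm : (l :: S.sort (·≤·)).Perm ((insert l S).sort (·≤·)) := by
    refine List.perm_of_nodup_nodup_toFinset_eq hnd (Finset.sort_nodup _ _) ?_
    simp [Finset.sort_toFinset]
  obtain ⟨ε, hε, hm⟩ := mon_perm (k := k) hperm
  exact ⟨ε, hε, by rw [MON, MON, ← mon_cons]; exact hm⟩

lemma gen_mul_MON_of_mem {l : Fin n} {S : Finset (Fin n)} (h : l ∈ S) :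
    (gen l : ExteriorAlgebra k (Fin n → k)) * MON S = 0 :=
  gen_mul_mon_of_mem ((Finset.mem_sort _).mpr h)

end DIRaux

namespace DIRaux
open ExteriorAlgebra
variable {k : Type*} [Field k] {n : ℕ}

lemma ksmul_mem_ideal (I : Ideal (ExteriorAlgebra k (Fin n → k))) (ε : k)
    {y : ExteriorAlgebra k (Fin n → k)} (hy : y ∈ I) : ε • y ∈ I := by
  rw [Algebra.smul_def]
  exact I.mul_mem_left _ hy

/-- products of two `ι`s are central -/
lemma iota_mul_iota_central (u v : Fin n → k) (x : ExteriorAlgebra k (Fin n → k)) :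
    (ι k u * ι k v) * x = x * (ι k u * ι k v) := by
  induction x using CliffordAlgebra.induction with
  | algebraMap r => rw [← Algebra.commutes r (ι k u * ι k v)]
  | ι w =>
      calc (ι k u * ι k v) * ι k w = ι k u * (ι k v * ι k w) := mul_assoc _ _ _
        _ = -(ι k u * ι k w * ι k v) := by rw [ι_anticomm v w]; simp [mul_assoc]
        _ = ι k w * ι k u * ι k v := by rw [ι_anticomm u w]; simp [mul_assoc]
        _ = ι k w * (ι k u * ι k v) := mul_assoc _ _ _
  | mul a b ha hb => rw [← mul_assoc, ha, mul_assoc, hb, ← mul_assoc]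
  | add a b ha hb => rw [mul_add, add_mul, ha, hb]

lemma gen_mul_gen_central (a b : Fin n) (x : ExteriorAlgebra k (Fin n → k)) :
    (gen a * gen b) * x = x * (gen a * gen b) := iota_mul_iota_central _ _ x

lemma iota_mul_mon_swap (v : Fin n → k) (L : List (Fin n)) :
    ∃ ε : k, IsSign ε ∧ ι k v * mon L = ε • (mon L * ι k v) := by
  induction L with
  | nil => exact ⟨1, IsSign.one, by simp⟩
  | cons a L ih =>
      obtain ⟨ε, hε, h⟩ := ih
      refine ⟨-ε, hε.neg, ?_⟩
      rw [mon_cons, ← mul_assoc, gen, ι_anticomm, ← gen, neg_mul, mul_assoc, h]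
      simp only [mul_smul_comm, neg_smul, mul_assoc]

/-- left multiples of `ι v` lie in the span of `ι v`, and `ι v * x * ι v = 0` -/
lemma iota_mul_mem_span (v : Fin n → k) (x : ExteriorAlgebra k (Fin n → k)) :
    ι k v * x ∈ Ideal.span {ι k v} := by
  have hx : x ∈ Submodule.span k (Set.range (mon : List (Fin n) → ExteriorAlgebra k (Fin n → k))) := by
    rw [span_mon_eq_top]; trivial
  induction hx using Submodule.span_induction with
  | mem y hy =>
      obtain ⟨L, rfl⟩ := hy
      obtain ⟨ε, hε, h⟩ := iota_mul_mon_swap v L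
      rw [h]
      exact ksmul_mem_ideal _ ε (Ideal.mul_mem_left _ _ (Ideal.subset_span rfl))
  | zero => rw [mul_zero]; exact Ideal.zero_mem _
  | add a b _ _ ha hb => rw [mul_add]; exact Ideal.add_mem _ ha hb
  | smul c a _ ha => rw [mul_smul_comm]; exact ksmul_mem_ideal _ c ha

lemma iota_mul_mul_iota (v : Fin n → k) (x : ExteriorAlgebra k (Fin n → k)) :
    ι k v * (x * ι k v) = 0 := by
  have hx : x ∈ Submodule.span k (Set.range (mon : List (Fin n) → ExteriorAlgebra k (Fin n → k))) := by
    rw [span_mon_eq_top]; trivial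
  induction hx using Submodule.span_induction with
  | mem y hy =>
      obtain ⟨L, rfl⟩ := hy
      obtain ⟨ε, hε, h⟩ := iota_mul_mon_swap v L
      rw [← mul_assoc, h, smul_mul_assoc, mul_assoc, ι_sq_zero, mul_zero, smul_zero]
  | zero => rw [zero_mul, mul_zero]
  | add a b _ _ ha hb => rw [add_mul, mul_add, ha, hb, add_zero]
  | smul c a _ ha => rw [smul_mul_assoc, mul_smul_comm, ha, smul_zero]

section Graph
variable (G : SimpleGraph (Fin n))

def DepL (L : List (Fin n)) : Prop := ∃ a b, G.Adj a b ∧ a ∈ L ∧ b ∈ L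

def IndepF (S : Finset (Fin n)) : Prop := ∀ a ∈ S, ∀ b ∈ S, ¬ G.Adj a b

/-- the exterior edge ideal -/
noncomputable def eideal : Ideal (ExteriorAlgebra k (Fin n → k)) :=
  Ideal.span {x | ∃ a b : Fin n, G.Adj a b ∧ x = gen a * gen b}

lemma mon_mem_eideal {L : List (Fin n)} (h : DepL G L) :
    (mon L : ExteriorAlgebra k (Fin n → k)) ∈ eideal (k := k) G := by
  obtain ⟨a, b, hab, haL, hbL⟩ := h
  have hba : b ∈ L.erase a := (List.mem_erase_of_ne (G.ne_of_adj hab).symm).mpr hbL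
  have h1 : L.Perm (a :: b :: ((L.erase a).erase b)) := by
    refine (List.perm_cons_erase haL).trans ?_
    exact List.Perm.cons a (List.perm_cons_erase hba)
  obtain ⟨ε, hε, hm⟩ := mon_perm (k := k) h1
  rw [hm, mon_cons, mon_cons, ← mul_assoc, gen_mul_gen_central]
  refine ksmul_mem_ideal _ ε (Ideal.mul_mem_left _ _ (Ideal.subset_span ⟨a, b, hab, rfl⟩))

lemma eideal_le_span_dep {x : ExteriorAlgebra k (Fin n → k)} (hx : x ∈ eideal (k := k) G) :
    x ∈ Submodule.span k ((mon : List (Fin n) → ExteriorAlgebra k (Fin n → k)) '' {L : List (Fin n) | DepL G L}) := by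
  set S := Submodule.span k ((mon : List (Fin n) → ExteriorAlgebra k (Fin n → k)) '' {L : List (Fin n) | DepL G L})
  have hmul : ∀ r : ExteriorAlgebra k (Fin n → k), ∀ y ∈ S, r * y ∈ S := by
    intro r
    have hr : r ∈ Submodule.span k (Set.range (mon : List (Fin n) → ExteriorAlgebra k (Fin n → k))) := by
      rw [span_mon_eq_top]; trivial
    induction hr using Submodule.span_induction with
    | mem z hz =>
        obtain ⟨K, rfl⟩ := hz
        intro y hy
        induction hy using Submodule.span_induction with
        | mem w hw =>
            obtain ⟨L, hL, rfl⟩ := hw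
            rw [← mon_append]
            refine Submodule.subset_span ⟨K ++ L, ?_, rfl⟩
            obtain ⟨a, b, hab, ha, hb⟩ := hL
            exact ⟨a, b, hab, List.mem_append_right _ ha, List.mem_append_right _ hb⟩
        | zero => rw [mul_zero]; exact Submodule.zero_mem S
        | add a b _ _ ha hb => rw [mul_add]; exact Submodule.add_mem S ha hb
        | smul c a _ ha => rw [mul_smul_comm]; exact Submodule.smul_mem S c ha
    | zero => intro y hy; rw [zero_mul]; exact Submodule.zero_mem S
    | add a b _ _ ha hb => intro y hy; rw [add_mul]; exact Submodule.add_mem S (ha y hy) (hb y hy)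
    | smul c a _ ha => intro y hy; rw [smul_mul_assoc]; exact Submodule.smul_mem S c (ha y hy)
  induction hx using Submodule.span_induction with
  | mem z hz =>
      obtain ⟨a, b, hab, rfl⟩ := hz
      have : (gen a * gen b : ExteriorAlgebra k (Fin n → k)) = mon [a, b] := by
        rw [mon_cons, mon_cons, mon_nil, mul_one]
      rw [this]
      exact Submodule.subset_span ⟨[a,b], ⟨a, b, hab, by simp, by simp⟩, rfl⟩
  | zero => exact Submodule.zero_mem S
  | add a b _ _ ha hb => exact Submodule.add_mem S ha hb
  | smul r a _ ha => rw [smul_eq_mul]; exact hmul r a ha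

lemma phiF_eideal_eq_zero {T : Finset (Fin n)} (hT : IndepF G T)
    {x : ExteriorAlgebra k (Fin n → k)} (hx : x ∈ eideal (k := k) G) :
    phiF T x = 0 := by
  have hx' := eideal_le_span_dep G hx
  clear hx
  induction hx' using Submodule.span_induction with
  | mem z hz =>
      obtain ⟨L, hL, rfl⟩ := hz
      by_cases hnd : L.Nodup
      · refine phiL_mon_zero (Finset.sort_nodup _ _) hnd ?_
        intro hperm
        obtain ⟨a, b, hab, ha, hb⟩ := hL
        exact hT a ((Finset.mem_sort _).mp (hperm.mem_iff.mp ha))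
          b ((Finset.mem_sort _).mp (hperm.mem_iff.mp hb)) hab
      · rw [mon_eq_zero_of_not_nodup hnd, map_zero]
  | zero => exact map_zero _
  | add a b _ _ ha hb => rw [map_add, ha, hb, add_zero]
  | smul c a _ ha => rw [map_smul, ha, smul_zero]

end Graph
end DIRaux

namespace DIRaux
open ExteriorAlgebra
variable {k : Type*} [Field k] {n : ℕ}

noncomputable abbrev lc : (Finset (Fin n) →₀ k) →ₗ[k] ExteriorAlgebra k (Fin n → k) :=
  Finsupp.linearCombination k MON

lemma phiF_lc (c : Finset (Fin n) →₀ k) (T : Finset (Fin n)) :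
    phiF T (lc c) = c T := by
  rw [lc, Finsupp.linearCombination_apply, Finsupp.sum, map_sum]
  have h1 : ∀ S ∈ c.support, phiF T (c S • MON S) = if S = T then c S else 0 := by
    intro S _
    rw [map_smul, phiF_MON, smul_ite, smul_eq_mul, mul_one, smul_zero]
  rw [Finset.sum_congr rfl h1, Finset.sum_ite_eq' c.support T c]
  by_cases hT : T ∈ c.support
  · rw [if_pos hT]
  · rw [if_neg hT, eq_comm]
    exact Finsupp.notMem_support_iff.mp hT

lemma phi_gen_MON_eq_zero {l : Fin n} {S T : Finset (Fin n)}
    (h : l ∈ S ∨ insert l S ≠ T) :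
    phiF T ((gen l : ExteriorAlgebra k (Fin n → k)) * MON S) = 0 := by
  by_cases hl : l ∈ S
  · rw [gen_mul_MON_of_mem hl, map_zero]
  · obtain ⟨ε, hε, hm⟩ := gen_mul_MON (k := k) (l := l) (S := S) hl
    have hne : insert l S ≠ T := h.resolve_left hl
    rw [hm, map_smul, phiF_MON, if_neg hne, smul_zero]

lemma phi_ell_lc (i j : Fin n) (c : Finset (Fin n) →₀ k) (T : Finset (Fin n)) :
    phiF T ((gen i - gen j : ExteriorAlgebra k (Fin n → k)) * lc c) =
      ∑ S ∈ c.support,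
        (c S * phiF T ((gen i : ExteriorAlgebra k (Fin n → k)) * MON S)
          - c S * phiF T ((gen j : ExteriorAlgebra k (Fin n → k)) * MON S)) := by
  rw [lc, Finsupp.linearCombination_apply, Finsupp.sum, Finset.mul_sum, map_sum]
  refine Finset.sum_congr rfl fun S _ => ?_
  rw [mul_smul_comm, sub_mul, smul_sub, map_sub, map_smul, map_smul, smul_eq_mul, smul_eq_mul]

section IJ
variable (G : SimpleGraph (Fin n)) {i j : Fin n}

/-- vanishing of coefficients, `i`-version -/
lemma coef_zero_i (hij : i ≠ j) (c : Finset (Fin n) →₀ k)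
    (hc : (gen i - gen j : ExteriorAlgebra k (Fin n → k)) * lc c ∈ eideal (k := k) G)
    {S₀ : Finset (Fin n)} (hi : i ∉ S₀) (hj : j ∉ S₀)
    (hT : IndepF G (insert i S₀)) : c S₀ = 0 := by
  set T := insert i S₀ with hTdef
  have hjT : j ∉ T := by
    simp only [hTdef, Finset.mem_insert]
    rintro (rfl | h) <;> [exact hij rfl; exact hj h]
  obtain ⟨ε₀, hε₀, hins⟩ := gen_mul_MON (k := k) (l := i) (S := S₀) hi
  have h0 : phiF T ((gen i - gen j : ExteriorAlgebra k (Fin n → k)) * lc c) = 0 :=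
    phiF_eideal_eq_zero G hT hc
  rw [phi_ell_lc] at h0
  have h1 : ∀ S ∈ c.support,
      (c S * phiF T ((gen i : ExteriorAlgebra k (Fin n → k)) * MON S)
        - c S * phiF T ((gen j : ExteriorAlgebra k (Fin n → k)) * MON S))
      = if S = S₀ then c S * ε₀ else 0 := by
    intro S _
    have hgj : phiF T ((gen j : ExteriorAlgebra k (Fin n → k)) * MON S) = 0 := by
      refine phi_gen_MON_eq_zero ?_
      by_cases hjS : j ∈ S
      · exact Or.inl hjS
      · exact Or.inr fun hh => hjT (hh ▸ Finset.mem_insert_self j S)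
    rcases eq_or_ne S S₀ with rfl | hSS
    · rw [if_pos rfl, hgj, mul_zero, sub_zero, hins, map_smul, phiF_MON, if_pos rfl]
      rw [smul_eq_mul, mul_one]
    · rw [if_neg hSS, hgj, mul_zero, sub_zero]
      have : phiF T ((gen i : ExteriorAlgebra k (Fin n → k)) * MON S) = 0 := by
        refine phi_gen_MON_eq_zero ?_
        by_cases hiS : i ∈ S
        · exact Or.inl hiS
        · refine Or.inr fun hh => hSS ?_
          have := congrArg (fun X => Finset.erase X i) hh
          simpa [Finset.erase_insert hiS, Finset.erase_insert hi, hTdef] using this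
      rw [this, mul_zero]
  rw [Finset.sum_congr rfl h1, Finset.sum_ite_eq' c.support S₀ (fun S => c S * ε₀)] at h0
  by_cases hS₀ : S₀ ∈ c.support
  · rw [if_pos hS₀] at h0
    rcases mul_eq_zero.mp h0 with h | h
    · exact h
    · exact absurd h hε₀.ne_zero
  · exact Finsupp.notMem_support_iff.mp hS₀

/-- vanishing of coefficients, `j`-version -/
lemma coef_zero_j (hij : i ≠ j) (c : Finset (Fin n) →₀ k)
    (hc : (gen i - gen j : ExteriorAlgebra k (Fin n → k)) * lc c ∈ eideal (k := k) G)
    {S₀ : Finset (Fin n)} (hi : i ∉ S₀) (hj : j ∉ S₀)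
    (hT : IndepF G (insert j S₀)) : c S₀ = 0 := by
  set T := insert j S₀ with hTdef
  have hiT : i ∉ T := by
    simp only [hTdef, Finset.mem_insert]
    rintro (rfl | h) <;> [exact hij rfl; exact hi h]
  obtain ⟨ε₀, hε₀, hins⟩ := gen_mul_MON (k := k) (l := j) (S := S₀) hj
  have h0 : phiF T ((gen i - gen j : ExteriorAlgebra k (Fin n → k)) * lc c) = 0 :=
    phiF_eideal_eq_zero G hT hc
  rw [phi_ell_lc] at h0
  have h1 : ∀ S ∈ c.support,
      (c S * phiF T ((gen i : ExteriorAlgebra k (Fin n → k)) * MON S)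
        - c S * phiF T ((gen j : ExteriorAlgebra k (Fin n → k)) * MON S))
      = if S = S₀ then -(c S * ε₀) else 0 := by
    intro S _
    have hgi : phiF T ((gen i : ExteriorAlgebra k (Fin n → k)) * MON S) = 0 := by
      refine phi_gen_MON_eq_zero ?_
      by_cases hiS : i ∈ S
      · exact Or.inl hiS
      · exact Or.inr fun hh => hiT (hh ▸ Finset.mem_insert_self i S)
    rcases eq_or_ne S S₀ with rfl | hSS
    · rw [if_pos rfl, hgi, mul_zero, zero_sub, hins, map_smul, phiF_MON, if_pos rfl]
      rw [smul_eq_mul, mul_one]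
    · rw [if_neg hSS, hgi, mul_zero, zero_sub]
      have : phiF T ((gen j : ExteriorAlgebra k (Fin n → k)) * MON S) = 0 := by
        refine phi_gen_MON_eq_zero ?_
        by_cases hjS : j ∈ S
        · exact Or.inl hjS
        · refine Or.inr fun hh => hSS ?_
          have := congrArg (fun X => Finset.erase X j) hh
          simpa [Finset.erase_insert hjS, Finset.erase_insert hj, hTdef] using this
      rw [this, mul_zero, neg_zero]
  rw [Finset.sum_congr rfl h1, Finset.sum_ite_eq' c.support S₀ (fun S => -(c S * ε₀))] at h0
  by_cases hS₀ : S₀ ∈ c.support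
  · rw [if_pos hS₀] at h0
    rcases mul_eq_zero.mp (neg_eq_zero.mp h0) with h | h
    · exact h
    · exact absurd h hε₀.ne_zero
  · exact Finsupp.notMem_support_iff.mp hS₀

end IJ
end DIRaux

namespace DIRaux
open ExteriorAlgebra
variable {k : Type*} [Field k] {n : ℕ}

section IJ2
variable (G : SimpleGraph (Fin n)) {i j : Fin n}

/-- the pairing relation between coefficients -/
lemma coef_relation (hij : i ≠ j) (c : Finset (Fin n) →₀ k)
    (hc : (gen i - gen j : ExteriorAlgebra k (Fin n → k)) * lc c ∈ eideal (k := k) G)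
    {T : Finset (Fin n)} (hT : IndepF G T) (hiT : i ∈ T) (hjT : j ∈ T) :
    c (T.erase i) • ((gen i : ExteriorAlgebra k (Fin n → k)) * MON (T.erase i)) =
      c (T.erase j) • ((gen j : ExteriorAlgebra k (Fin n → k)) * MON (T.erase j)) := by
  set S₁ := T.erase i with hS₁
  set S₂ := T.erase j with hS₂
  have hiS₁ : i ∉ S₁ := Finset.notMem_erase i T
  have hjS₂ : j ∉ S₂ := Finset.notMem_erase j T
  have hjS₁ : j ∈ S₁ := Finset.mem_erase.mpr ⟨hij.symm, hjT⟩
  have hiS₂ : i ∈ S₂ := Finset.mem_erase.mpr ⟨hij, hiT⟩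
  have hS₁S₂ : S₁ ≠ S₂ := fun hh => hiS₁ (hh ▸ hiS₂)
  have hins₁ : insert i S₁ = T := Finset.insert_erase hiT
  have hins₂ : insert j S₂ = T := Finset.insert_erase hjT
  obtain ⟨ε₁, hε₁, h₁⟩ := gen_mul_MON (k := k) (l := i) (S := S₁) hiS₁
  obtain ⟨ε₂, hε₂, h₂⟩ := gen_mul_MON (k := k) (l := j) (S := S₂) hjS₂
  rw [hins₁] at h₁
  rw [hins₂] at h₂
  have h0 : phiF T ((gen i - gen j : ExteriorAlgebra k (Fin n → k)) * lc c) = 0 :=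
    phiF_eideal_eq_zero G hT hc
  rw [phi_ell_lc] at h0
  have h1 : ∀ S ∈ c.support,
      (c S * phiF T ((gen i : ExteriorAlgebra k (Fin n → k)) * MON S)
        - c S * phiF T ((gen j : ExteriorAlgebra k (Fin n → k)) * MON S))
      = (if S = S₁ then c S * ε₁ else 0) + (if S = S₂ then -(c S * ε₂) else 0) := by
    intro S _
    have hterm_i : phiF T ((gen i : ExteriorAlgebra k (Fin n → k)) * MON S)
        = if S = S₁ then ε₁ else 0 := by
      rcases eq_or_ne S S₁ with rfl | hne
      · rw [if_pos rfl, h₁, map_smul, phiF_MON, if_pos rfl, smul_eq_mul, mul_one]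
      · rw [if_neg hne]
        refine phi_gen_MON_eq_zero ?_
        by_cases hiS : i ∈ S
        · exact Or.inl hiS
        · refine Or.inr fun hh => hne ?_
          have := congrArg (fun X => Finset.erase X i) hh
          simpa [Finset.erase_insert hiS, hS₁] using this
    have hterm_j : phiF T ((gen j : ExteriorAlgebra k (Fin n → k)) * MON S)
        = if S = S₂ then ε₂ else 0 := by
      rcases eq_or_ne S S₂ with rfl | hne
      · rw [if_pos rfl, h₂, map_smul, phiF_MON, if_pos rfl, smul_eq_mul, mul_one]
      · rw [if_neg hne]
        refine phi_gen_MON_eq_zero ?_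
        by_cases hjS : j ∈ S
        · exact Or.inl hjS
        · refine Or.inr fun hh => hne ?_
          have := congrArg (fun X => Finset.erase X j) hh
          simpa [Finset.erase_insert hjS, hS₂] using this
    rw [hterm_i, hterm_j]
    split_ifs <;> ring
  rw [Finset.sum_congr rfl h1, Finset.sum_add_distrib,
    Finset.sum_ite_eq' c.support S₁ (fun S => c S * ε₁),
    Finset.sum_ite_eq' c.support S₂ (fun S => -(c S * ε₂))] at h0
  have hv₁ : (if S₁ ∈ c.support then c S₁ * ε₁ else 0) = c S₁ * ε₁ := by
    by_cases h : S₁ ∈ c.support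
    · rw [if_pos h]
    · rw [if_neg h, Finsupp.notMem_support_iff.mp h, zero_mul]
  have hv₂ : (if S₂ ∈ c.support then -(c S₂ * ε₂) else 0) = -(c S₂ * ε₂) := by
    by_cases h : S₂ ∈ c.support
    · rw [if_pos h]
    · rw [if_neg h, Finsupp.notMem_support_iff.mp h, zero_mul, neg_zero]
  rw [hv₁, hv₂] at h0
  have hrel : c S₁ * ε₁ = c S₂ * ε₂ := by linear_combination h0
  rw [h₁, h₂, smul_smul, smul_smul, hrel]

/-- the pair of monomials lies in the span of the linear form -/
lemma pair_mem (hij : i ≠ j) (c : Finset (Fin n) →₀ k)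
    (hc : (gen i - gen j : ExteriorAlgebra k (Fin n → k)) * lc c ∈ eideal (k := k) G)
    {S : Finset (Fin n)} (hS : IndepF G S) (hiS : i ∈ S) (hjS : j ∉ S)
    (hNj : ∀ b ∈ S, ¬ G.Adj j b) :
    c S • (MON S : ExteriorAlgebra k (Fin n → k))
      + c (insert j (S.erase i)) • MON (insert j (S.erase i)) ∈
        Ideal.span {(gen i - gen j : ExteriorAlgebra k (Fin n → k))} := by
  set R := S.erase i with hR
  set T := insert j R with hTd
  set TT := insert j S with hTTd
  have hiR : i ∉ R := Finset.notMem_erase i S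
  have hjR : j ∉ R := fun hh => hjS (Finset.mem_of_mem_erase hh)
  have hinsiR : insert i R = S := Finset.insert_erase hiS
  have hiT : i ∉ T := by
    simp only [hTd, Finset.mem_insert]
    rintro (rfl | h) <;> [exact hij rfl; exact hiR h]
  have hiTT : i ∈ TT := Finset.mem_insert_of_mem hiS
  have hjTT : j ∈ TT := Finset.mem_insert_self j S
  have hTTei : TT.erase i = T := by
    rw [hTTd, Finset.erase_insert_of_ne hij.symm, ← hR]
  have hTTej : TT.erase j = S := Finset.erase_insert hjS
  have hinsiT : insert i T = TT := by
    rw [hTd, Finset.insert_comm, hinsiR]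
  have hTT : IndepF G TT := by
    intro a ha b hb
    rcases Finset.mem_insert.mp ha with rfl | ha' <;>
      rcases Finset.mem_insert.mp hb with rfl | hb'
    · exact G.irrefl
    · exact hNj b hb'
    · exact fun hadj => hNj a ha' (hadj.symm)
    · exact hS a ha' b hb'
  -- signs
  obtain ⟨εa, hεa, ha⟩ := gen_mul_MON (k := k) (l := i) (S := R) hiR
  rw [hinsiR] at ha
  obtain ⟨εb, hεb, hb⟩ := gen_mul_MON (k := k) (l := j) (S := R) hjR
  rw [← hTd] at hb
  obtain ⟨ε₁, hε₁, h₁⟩ := gen_mul_MON (k := k) (l := i) (S := T) hiT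
  rw [hinsiT] at h₁
  obtain ⟨ε₂, hε₂, h₂⟩ := gen_mul_MON (k := k) (l := j) (S := S) hjS
  rw [← hTTd] at h₂
  -- the coefficient relation at TT
  have hrel := coef_relation G hij c hc hTT hiTT hjTT
  rw [hTTei, hTTej, h₁, h₂, smul_smul, smul_smul] at hrel
  have hrel' : c T * ε₁ = c S * ε₂ := by
    have := sub_eq_zero.mpr hrel
    rw [← sub_smul] at this
    rcases smul_eq_zero.mp this with h | h
    · exact sub_eq_zero.mp h
    · exact absurd h (MON_ne_zero TT)
  -- the sign identity
  have hsign : εb * ε₁ = -(εa * ε₂) := by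
    have hLHS : (gen i : ExteriorAlgebra k (Fin n → k)) * (gen j * MON R)
        = (εb * ε₁) • MON TT := by
      rw [hb, mul_smul_comm, h₁, smul_smul]
    have hRHS : (gen i : ExteriorAlgebra k (Fin n → k)) * (gen j * MON R)
        = -((εa * ε₂) • MON TT) := by
      rw [← mul_assoc, gen, gen, ι_anticomm, ← gen, ← gen, neg_mul, mul_assoc, ha,
        mul_smul_comm, h₂, smul_smul]
    have := hLHS.symm.trans hRHS
    rw [← neg_smul] at this
    have h' := sub_eq_zero.mpr this
    rw [← sub_smul] at h'
    rcases smul_eq_zero.mp h' with h | h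
    · linear_combination h
    · exact absurd h (MON_ne_zero TT)
  have hkey : c T * εb = -(c S * εa) := by
    have s1 : ε₁ * ε₁ = 1 := hε₁.mul_self
    have s2 : ε₂ * ε₂ = 1 := hε₂.mul_self
    linear_combination (εb*ε₁) * hrel' + (c S * ε₂) * hsign - (c T * εb) * s1 - (c S * εa) * s2
  -- conclusion
  have hMS : c S • (MON S : ExteriorAlgebra k (Fin n → k))
      = (c S * εa) • ((gen i : ExteriorAlgebra k (Fin n → k)) * MON R) := by
    rw [ha, smul_smul, mul_assoc, hεa.mul_self, mul_one]
  have hMT : c T • (MON T : ExteriorAlgebra k (Fin n → k))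
      = (c T * εb) • ((gen j : ExteriorAlgebra k (Fin n → k)) * MON R) := by
    rw [hb, smul_smul, mul_assoc, hεb.mul_self, mul_one]
  rw [hMS, hMT, hkey, neg_smul, ← smul_neg, ← smul_add, ← sub_eq_add_neg, ← sub_mul]
  have hw : (gen i - gen j : ExteriorAlgebra k (Fin n → k))
      = ι k (Pi.single i 1 - Pi.single j 1) := by
    rw [map_sub, gen, gen]
  rw [hw]
  exact ksmul_mem_ideal _ _ (iota_mul_mem_span _ _)

end IJ2
end DIRaux

namespace DIRaux
open ExteriorAlgebra
variable {k : Type*} [Field k] {n : ℕ}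

lemma MON_two_front {S : Finset (Fin n)} {x y : Fin n} (hx : x ∈ S) (hy : y ∈ S)
    (hxy : x ≠ y) :
    ∃ (ε : k) (R : List (Fin n)), IsSign ε ∧
      (MON S : ExteriorAlgebra k (Fin n → k)) = ε • (gen x * (gen y * mon R)) := by
  set L := S.sort (·≤·) with hL
  have hxL : x ∈ L := (Finset.mem_sort _).mpr hx
  have hyL : y ∈ L.erase x := (List.mem_erase_of_ne hxy.symm).mpr ((Finset.mem_sort _).mpr hy)
  have hperm : L.Perm (x :: y :: ((L.erase x).erase y)) :=
    (List.perm_cons_erase hxL).trans (List.Perm.cons x (List.perm_cons_erase hyL))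
  obtain ⟨ε, hε, hm⟩ := mon_perm (k := k) hperm
  exact ⟨ε, (L.erase x).erase y, hε, by rw [MON, ← hL, hm, mon_cons, mon_cons]⟩

section IJ3
variable (G : SimpleGraph (Fin n)) {i j : Fin n}

lemma classIJ {S : Finset (Fin n)} (hij : i ≠ j) (hiS : i ∈ S) (hjS : j ∈ S) :
    (MON S : ExteriorAlgebra k (Fin n → k)) ∈
      Ideal.span {(gen i - gen j : ExteriorAlgebra k (Fin n → k))} := by
  obtain ⟨ε, R, hε, hm⟩ := MON_two_front (k := k) hiS hjS hij
  have hzz : (gen j : ExteriorAlgebra k (Fin n → k)) * (gen j * mon R) = 0 := by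
    rw [← mul_assoc, gen, ι_sq_zero, zero_mul]
  have : (gen i : ExteriorAlgebra k (Fin n → k)) * (gen j * mon R)
      = (gen i - gen j) * (gen j * mon R) := by
    rw [sub_mul, hzz, sub_zero]
  rw [hm, this]
  have hw : (gen i - gen j : ExteriorAlgebra k (Fin n → k))
      = ι k (Pi.single i 1 - Pi.single j 1) := by rw [map_sub, gen, gen]
  rw [hw]
  exact ksmul_mem_ideal _ _ (iota_mul_mem_span _ _)

lemma classIB {S : Finset (Fin n)} {b : Fin n} (hib : i ≠ b) (hiS : i ∈ S) (hbS : b ∈ S)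
    (hadj : G.Adj j b) :
    (MON S : ExteriorAlgebra k (Fin n → k)) ∈
      eideal (k := k) G ⊔ Ideal.span {(gen i - gen j : ExteriorAlgebra k (Fin n → k))} := by
  obtain ⟨ε, R, hε, hm⟩ := MON_two_front (k := k) hiS hbS hib
  have hsplit : (gen i : ExteriorAlgebra k (Fin n → k)) * (gen b * mon R)
      = (gen i - gen j) * (gen b * mon R) + (gen j * gen b) * mon R := by
    rw [sub_mul, mul_assoc]; abel
  rw [hm, hsplit, smul_add]
  refine Submodule.add_mem _ ?_ ?_
  · refine Submodule.mem_sup_right ?_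
    have hw : (gen i - gen j : ExteriorAlgebra k (Fin n → k))
        = ι k (Pi.single i 1 - Pi.single j 1) := by rw [map_sub, gen, gen]
    rw [hw]
    exact ksmul_mem_ideal _ _ (iota_mul_mem_span _ _)
  · refine Submodule.mem_sup_left ?_
    rw [gen_mul_gen_central]
    exact ksmul_mem_ideal _ _ (Ideal.mul_mem_left _ _ (Ideal.subset_span ⟨j, b, hadj, rfl⟩))

lemma classJA {S : Finset (Fin n)} {a : Fin n} (hja : j ≠ a) (hjS : j ∈ S) (haS : a ∈ S)
    (hadj : G.Adj i a) :
    (MON S : ExteriorAlgebra k (Fin n → k)) ∈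
      eideal (k := k) G ⊔ Ideal.span {(gen i - gen j : ExteriorAlgebra k (Fin n → k))} := by
  obtain ⟨ε, R, hε, hm⟩ := MON_two_front (k := k) hjS haS hja
  have hsplit : (gen j : ExteriorAlgebra k (Fin n → k)) * (gen a * mon R)
      = (gen i * gen a) * mon R - (gen i - gen j) * (gen a * mon R) := by
    rw [sub_mul, mul_assoc]; abel
  rw [hm, hsplit, smul_sub]
  refine Submodule.sub_mem _ ?_ ?_
  · refine Submodule.mem_sup_left ?_
    rw [gen_mul_gen_central]
    exact ksmul_mem_ideal _ _ (Ideal.mul_mem_left _ _ (Ideal.subset_span ⟨i, a, hadj, rfl⟩))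
  · refine Submodule.mem_sup_right ?_
    have hw : (gen i - gen j : ExteriorAlgebra k (Fin n → k))
        = ι k (Pi.single i 1 - Pi.single j 1) := by rw [map_sub, gen, gen]
    rw [hw]
    exact ksmul_mem_ideal _ _ (iota_mul_mem_span _ _)

/-- multiplying a member of `I ⊔ (ℓ)` by `ℓ` lands in `I` -/
lemma ell_mul_sup {x : ExteriorAlgebra k (Fin n → k)}
    (hx : x ∈ eideal (k := k) G ⊔ Ideal.span {(gen i - gen j : ExteriorAlgebra k (Fin n → k))}) :
    (gen i - gen j : ExteriorAlgebra k (Fin n → k)) * x ∈ eideal (k := k) G := by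
  obtain ⟨p, hp, q, hq, rfl⟩ := Submodule.mem_sup.mp hx
  rw [mul_add]
  refine Submodule.add_mem _ (Ideal.mul_mem_left _ _ hp) ?_
  have hw : (gen i - gen j : ExteriorAlgebra k (Fin n → k))
      = ι k (Pi.single i 1 - Pi.single j 1) := by rw [map_sub, gen, gen]
  rw [Ideal.span, hw, Submodule.mem_span_singleton] at hq
  obtain ⟨r, rfl⟩ := hq
  have : (r : ExteriorAlgebra k (Fin n → k)) • ι k (Pi.single i 1 - Pi.single j 1)
      = r * ι k (Pi.single i 1 - Pi.single j 1) := rfl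
  rw [hw, this, iota_mul_mul_iota]
  exact Submodule.zero_mem _

end IJ3
end DIRaux

namespace DIRaux
open ExteriorAlgebra
variable {k : Type*} [Field k] {n : ℕ}

section Main
variable (G : SimpleGraph (Fin n)) {i j : Fin n}

lemma main_ind (hij : i ≠ j) (hnadj : ¬ G.Adj i j)
    (hadj : ∀ a b : Fin n, G.Adj i a → G.Adj j b → G.Adj a b) :
    ∀ (N : ℕ) (c : Finset (Fin n) →₀ k), c.support.card ≤ N →
      (∀ S ∈ c.support, IndepF G S) →
      (gen i - gen j : ExteriorAlgebra k (Fin n → k)) * lc c ∈ eideal (k := k) G →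
      lc c ∈ eideal (k := k) G ⊔
        Ideal.span {(gen i - gen j : ExteriorAlgebra k (Fin n → k))} := by
  intro N
  induction N with
  | zero =>
      intro c hcard _ _
      have : c.support = ∅ := Finset.card_eq_zero.mp (Nat.le_zero.mp hcard)
      rw [Finsupp.support_eq_empty.mp this, map_zero]
      exact Submodule.zero_mem _
  | succ N ih =>
      intro c hcard hindep hell
      by_cases hc0 : c = 0
      · rw [hc0, map_zero]; exact Submodule.zero_mem _
      obtain ⟨S, hSsupp⟩ := Finsupp.support_nonempty_iff.mpr hc0
      have hSind := hindep S hSsupp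
      have hpos : 0 < c.support.card := Finset.card_pos.mpr ⟨S, hSsupp⟩
      set J := eideal (k := k) G ⊔
        Ideal.span {(gen i - gen j : ExteriorAlgebra k (Fin n → k))} with hJ
      -- generic removal step
      have step : ∀ (z : ExteriorAlgebra k (Fin n → k)), z ∈ J →
          ∀ c' : Finset (Fin n) →₀ k, lc c' = lc c - z →
          c'.support.card ≤ N → (∀ S' ∈ c'.support, IndepF G S') → lc c ∈ J := by
        intro z hzJ c' hc' hcard' hind'
        have hell' : (gen i - gen j : ExteriorAlgebra k (Fin n → k)) * lc c' ∈
            eideal (k := k) G := by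
          rw [hc', mul_sub]
          exact Submodule.sub_mem _ hell (ell_mul_sup G hzJ)
        have hmem := ih c' hcard' hind' hell'
        have : lc c = lc c' + z := by rw [hc']; abel
        rw [this]
        exact Submodule.add_mem _ hmem hzJ
      -- single removal
      have hlc_erase : lc (c.erase S) = lc c - c S • MON S := by
        have h1 := congrArg (lc (k := k) (n := n)) (Finsupp.erase_add_single S c)
        rw [map_add, Finsupp.linearCombination_single] at h1
        exact eq_sub_of_add_eq h1
      have hcard_erase : (c.erase S).support.card ≤ N := by
        rw [Finsupp.support_erase, Finset.card_erase_of_mem hSsupp]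
        omega
      have hind_erase : ∀ S' ∈ (c.erase S).support, IndepF G S' := by
        intro S' hS'
        refine hindep S' ?_
        rw [Finsupp.support_erase] at hS'
        exact Finset.mem_of_mem_erase hS'
      have single_removal : (MON S : ExteriorAlgebra k (Fin n → k)) ∈ J → lc c ∈ J := by
        intro hMS
        exact step (c S • MON S) (ksmul_mem_ideal _ _ hMS) (c.erase S) hlc_erase
          hcard_erase hind_erase
      by_cases hiS : i ∈ S <;> by_cases hjS : j ∈ S
      · -- i ∈ S, j ∈ S
        exact single_removal (Submodule.mem_sup_right (classIJ hij hiS hjS))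
      · -- i ∈ S, j ∉ S
        by_cases hNjb : ∃ b ∈ S, G.Adj j b
        · obtain ⟨b, hbS, hjb⟩ := hNjb
          have hib : i ≠ b := fun h => hnadj (G.adj_symm (h ▸ hjb))
          exact single_removal (classIB G hib hiS hbS hjb)
        · push_neg at hNjb
          set T := insert j (S.erase i) with hTd
          have hTS : T ≠ S := fun h => hjS (h ▸ Finset.mem_insert_self j _)
          have hz := pair_mem G hij c hell hSind hiS hjS hNjb
          have hzJ : c S • (MON S : ExteriorAlgebra k (Fin n → k)) + c T • MON T ∈ J :=
            Submodule.mem_sup_right hz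
          have hlc2 : lc ((c.erase S).erase T)
              = lc c - (c S • (MON S : ExteriorAlgebra k (Fin n → k)) + c T • MON T) := by
            have h1 := congrArg (lc (k := k) (n := n))
              (Finsupp.erase_add_single T (c.erase S))
            rw [map_add, Finsupp.linearCombination_single, Finsupp.erase_ne hTS] at h1
            have h2 := eq_sub_of_add_eq h1
            rw [h2, hlc_erase]
            abel
          have hcard2 : ((c.erase S).erase T).support.card ≤ N := by
            rw [Finsupp.support_erase, Finsupp.support_erase]
            calc ((c.support.erase S).erase T).card ≤ (c.support.erase S).card :=
                  Finset.card_erase_le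
              _ = c.support.card - 1 := Finset.card_erase_of_mem hSsupp
              _ ≤ N := by omega
          have hind2 : ∀ S' ∈ ((c.erase S).erase T).support, IndepF G S' := by
            intro S' hS'
            refine hindep S' ?_
            rw [Finsupp.support_erase, Finsupp.support_erase] at hS'
            exact Finset.mem_of_mem_erase (Finset.mem_of_mem_erase hS')
          exact step _ hzJ _ hlc2 hcard2 hind2
      · -- j ∈ S, i ∉ S
        by_cases hNia : ∃ a ∈ S, G.Adj i a
        · obtain ⟨a, haS, hia⟩ := hNia
          have hja : j ≠ a := fun h => hnadj (h ▸ hia)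
          exact single_removal (classJA G hja hjS haS hia)
        · push_neg at hNia
          set T := insert i (S.erase j) with hTd
          have hiT : i ∈ T := Finset.mem_insert_self i _
          have hjT : j ∉ T := by
            rw [hTd]
            simp only [Finset.mem_insert]
            rintro (rfl | h) <;>
              [exact hij rfl; exact (Finset.notMem_erase j S) h]
          have hTS : T ≠ S := fun h => hiS (h ▸ hiT)
          have hTind : IndepF G T := by
            intro a ha b hb
            rcases Finset.mem_insert.mp ha with rfl | ha' <;>
              rcases Finset.mem_insert.mp hb with rfl | hb'
            · exact G.irrefl
            · exact hNia b (Finset.mem_of_mem_erase hb')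
            · exact fun h => hNia a (Finset.mem_of_mem_erase ha') h.symm
            · exact hSind a (Finset.mem_of_mem_erase ha') b (Finset.mem_of_mem_erase hb')
          have hNjT : ∀ b ∈ T, ¬ G.Adj j b := by
            intro b hb
            rcases Finset.mem_insert.mp hb with rfl | hb'
            · exact fun h => hnadj h.symm
            · exact hSind j hjS b (Finset.mem_of_mem_erase hb')
          have hback : insert j (T.erase i) = S := by
            rw [hTd, Finset.erase_insert (fun h => hiS (Finset.mem_of_mem_erase h)),
              Finset.insert_erase hjS]
          have hz := pair_mem G hij c hell hTind hiT hjT hNjT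
          rw [hback] at hz
          have hzJ : c S • (MON S : ExteriorAlgebra k (Fin n → k)) + c T • MON T ∈ J := by
            refine Submodule.mem_sup_right ?_
            have : c S • (MON S : ExteriorAlgebra k (Fin n → k)) + c T • MON T
                = c T • MON T + c S • MON S := by abel
            rw [this]
            exact hz
          have hlc2 : lc ((c.erase S).erase T)
              = lc c - (c S • (MON S : ExteriorAlgebra k (Fin n → k)) + c T • MON T) := by
            have h1 := congrArg (lc (k := k) (n := n))
              (Finsupp.erase_add_single T (c.erase S))
            rw [map_add, Finsupp.linearCombination_single, Finsupp.erase_ne hTS] at h1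
            have h2 := eq_sub_of_add_eq h1
            rw [h2, hlc_erase]
            abel
          have hcard2 : ((c.erase S).erase T).support.card ≤ N := by
            rw [Finsupp.support_erase, Finsupp.support_erase]
            calc ((c.support.erase S).erase T).card ≤ (c.support.erase S).card :=
                  Finset.card_erase_le
              _ = c.support.card - 1 := Finset.card_erase_of_mem hSsupp
              _ ≤ N := by omega
          have hind2 : ∀ S' ∈ ((c.erase S).erase T).support, IndepF G S' := by
            intro S' hS'
            refine hindep S' ?_
            rw [Finsupp.support_erase, Finsupp.support_erase] at hS'
            exact Finset.mem_of_mem_erase (Finset.mem_of_mem_erase hS')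
          exact step _ hzJ _ hlc2 hcard2 hind2
      · -- i ∉ S, j ∉ S : contradiction
        exfalso
        by_cases hNia : ∃ a ∈ S, G.Adj i a
        · by_cases hNjb : ∃ b ∈ S, G.Adj j b
          · obtain ⟨a, haS, hia⟩ := hNia
            obtain ⟨b, hbS, hjb⟩ := hNjb
            exact hSind a haS b hbS (hadj a b hia hjb)
          · push_neg at hNjb
            have hT : IndepF G (insert j S) := by
              intro a ha b hb
              rcases Finset.mem_insert.mp ha with rfl | ha' <;>
                rcases Finset.mem_insert.mp hb with rfl | hb'
              · exact G.irrefl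
              · exact hNjb b hb'
              · exact fun h => hNjb a ha' h.symm
              · exact hSind a ha' b hb'
            exact Finsupp.mem_support_iff.mp hSsupp (coef_zero_j G hij c hell hiS hjS hT)
        · push_neg at hNia
          have hT : IndepF G (insert i S) := by
            intro a ha b hb
            rcases Finset.mem_insert.mp ha with rfl | ha' <;>
              rcases Finset.mem_insert.mp hb with rfl | hb'
            · exact G.irrefl
            · exact hNia b hb'
            · exact fun h => hNia a ha' h.symm
            · exact hSind a ha' b hb'
          exact Finsupp.mem_support_iff.mp hSsupp (coef_zero_i G hij c hell hiS hjS hT)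

end Main
end DIRaux

namespace DIRaux
open ExteriorAlgebra
variable {k : Type*} [Field k] {n : ℕ}

/-- decomposition of an arbitrary element into ideal part and independent part -/
lemma decompose (G : SimpleGraph (Fin n)) (z : ExteriorAlgebra k (Fin n → k)) :
    ∃ p ∈ eideal (k := k) G,
      ∃ q ∈ Submodule.span k
        ((MON : Finset (Fin n) → ExteriorAlgebra k (Fin n → k)) '' {S | IndepF G S}),
      z = p + q := by
  have hz : z ∈ Submodule.span k
      (Set.range (mon : List (Fin n) → ExteriorAlgebra k (Fin n → k))) := by
    rw [span_mon_eq_top]; trivial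
  induction hz using Submodule.span_induction with
  | mem y hy =>
      obtain ⟨L, rfl⟩ := hy
      by_cases hnd : L.Nodup
      · obtain ⟨ε, hε, hm⟩ := mon_perm (k := k) (sort_perm_of_nodup hnd)
        by_cases hind : IndepF G L.toFinset
        · refine ⟨0, Submodule.zero_mem _, ε • MON L.toFinset, ?_, by rw [hm, MON, zero_add]⟩
          exact Submodule.smul_mem _ _ (Submodule.subset_span ⟨L.toFinset, hind, rfl⟩)
        · have hdep : DepL G L := by
            simp only [IndepF, not_forall] at hind
            obtain ⟨a, ha, b, hb, hab⟩ := hind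
            exact ⟨a, b, not_not.mp hab, List.mem_toFinset.mp ha, List.mem_toFinset.mp hb⟩
          exact ⟨mon L, mon_mem_eideal G hdep, 0, Submodule.zero_mem _, by rw [add_zero]⟩
      · exact ⟨0, Submodule.zero_mem _, 0, Submodule.zero_mem _,
          by rw [mon_eq_zero_of_not_nodup hnd, add_zero]⟩
  | zero => exact ⟨0, Submodule.zero_mem _, 0, Submodule.zero_mem _, by rw [add_zero]⟩
  | add a b _ _ ha hb =>
      obtain ⟨p, hp, q, hq, rfl⟩ := ha
      obtain ⟨p', hp', q', hq', rfl⟩ := hb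
      exact ⟨p + p', Submodule.add_mem _ hp hp', q + q', Submodule.add_mem _ hq hq', by abel⟩
  | smul ε a _ ha =>
      obtain ⟨p, hp, q, hq, rfl⟩ := ha
      exact ⟨ε • p, ksmul_mem_ideal _ _ hp, ε • q, Submodule.smul_mem _ _ hq, by
        rw [smul_add]⟩

end DIRaux

open DIRaux in
/-- Let `E` be the exterior algebra on generators `e 1, ..., e n` over a field and `G` a
graph on `n` vertices with exterior edge ideal `I`.  If `N[v_i] ∩ N[v_j] = ∅` and every
neighbor of `v_i` is adjacent to every neighbor of `v_j`, then `e_i - e_j` is regular on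
`E/I`, i.e. `(I : e_i - e_j) = I + (e_i - e_j)`. -/
theorem difference_is_regular {k : Type*} [Field k] {n : ℕ}
    (G : SimpleGraph (Fin n)) (i j : Fin n)
    (hdisj : (G.neighborSet i ∪ {i}) ∩ (G.neighborSet j ∪ {j}) = ∅)
    (hadj : ∀ a b : Fin n, G.Adj i a → G.Adj j b → G.Adj a b)
    (e : Fin n → ExteriorAlgebra k (Fin n → k))
    (he : ∀ l, e l = ExteriorAlgebra.ι k (Pi.single l (1 : k)))
    (I : Ideal (ExteriorAlgebra k (Fin n → k)))
    (hI : I = Ideal.span {x | ∃ a b : Fin n, G.Adj a b ∧ x = e a * e b}) :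
    ∀ g : ExteriorAlgebra k (Fin n → k),
      (e i - e j) * g ∈ I ↔ g ∈ I ⊔ Ideal.span {e i - e j} := by
  have he' : e = gen := funext fun l => (he l).trans rfl
  subst he'
  subst hI
  have hIe : Ideal.span {x | ∃ a b : Fin n, G.Adj a b ∧ x = gen a * gen b}
      = eideal (k := k) G := rfl
  rw [hIe]
  -- basic combinatorial consequences of the disjointness of closed neighborhoods
  have key : ∀ a : Fin n, a ∈ (G.neighborSet i ∪ {i} : Set (Fin n)) →
      a ∈ (G.neighborSet j ∪ {j} : Set (Fin n)) → False := by
    intro a h1 h2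
    have : a ∈ (G.neighborSet i ∪ {i}) ∩ (G.neighborSet j ∪ {j}) := ⟨h1, h2⟩
    rw [hdisj] at this
    exact this
  have hij : i ≠ j := fun h =>
    key i (Or.inr rfl) (Or.inr (Set.mem_singleton_iff.mpr h))
  have hnadj : ¬ G.Adj i j := fun h =>
    key j (Or.inl ((SimpleGraph.mem_neighborSet G i j).mpr h)) (Or.inr rfl)
  intro g
  constructor
  · intro hg
    obtain ⟨p, hp, q, hq, rfl⟩ := decompose G g
    have hellq : (gen i - gen j : ExteriorAlgebra k (Fin n → k)) * q ∈ eideal (k := k) G := by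
      have h1 : (gen i - gen j : ExteriorAlgebra k (Fin n → k)) * p ∈ eideal (k := k) G :=
        Ideal.mul_mem_left _ _ hp
      have h2 : (gen i - gen j : ExteriorAlgebra k (Fin n → k)) * q
          = (gen i - gen j) * (p + q) - (gen i - gen j) * p := by rw [mul_add]; abel
      rw [h2]
      exact Submodule.sub_mem _ hg h1
    rw [Finsupp.mem_span_image_iff_linearCombination] at hq
    obtain ⟨c, hcsupp, rfl⟩ := hq
    have hsup : ∀ S ∈ c.support, IndepF G S := fun S hS =>
      (Finsupp.mem_supported k c).mp hcsupp hS
    have hmem := main_ind G hij hnadj hadj c.support.card c le_rfl hsup hellq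
    exact Submodule.add_mem _ (Submodule.mem_sup_left hp) hmem
  · intro hg
    exact ell_mul_sup G hg
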